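/- Let p ∈ ℝⁿ and p̂ ∈ ℝⁿ with p ≥ 0 and p̂ ≥ 0 satisfy, respectively, the algebraic equation p = s + Aᵀp + Σᵢ min{rᵢ + Bᵢᵀp, 0}·Eᵢ and the algebraic inequality p̂ ≥ s + Aᵀp̂ + Σᵢ min{rᵢ + Bᵢᵀp̂, 0}·Eᵢ. Then p̂ ≥ p entrywise. -/

import Mathlib

open Matrix Finset

/-- `min{v, 0}`: the minimum of 0 and of all entries of the vector `v`. -/
noncomputable def minZero {α : Type*} [Fintype α] (v : α → ℝ) : ℝ :=
  Finset.univ.fold min 0 v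

/-- `‖v‖∞` for a vector: the maximum absolute entry. -/
noncomputable def vecSupNorm {α : Type*} [Fintype α] (v : α → ℝ) : ℝ :=
  Finset.univ.fold max 0 (fun a => |v a|)

/-- `‖M‖∞` for a matrix: the maximum absolute row sum. -/
noncomputable def matInfNorm {α β : Type*} [Fintype α] [Fintype β] (M : Matrix α β ℝ) : ℝ :=
  Finset.univ.fold max 0 (fun a => ∑ b, |M a b|)

/-- `‖M‖₁` for a matrix: the maximum absolute column sum. -/
noncomputable def matOneNorm {α β : Type*} [Fintype α] [Fintype β] (M : Matrix α β ℝ) : ℝ :=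
  matInfNorm Mᵀ

/-- The feasible gain set 𝒦(E): K ≥ 0 entrywise and, for each block i,
either 𝟏ᵀKᵢ = Eᵢᵀ or 𝟏ᵀKᵢ = 0. -/
def feasibleGain {n : ℕ} (m : Fin n → ℕ) (E : Matrix (Fin n) (Fin n) ℝ) :
    Set (Matrix ((i : Fin n) × Fin (m i)) (Fin n) ℝ) :=
  {K | (∀ a j, 0 ≤ K a j) ∧
    ∀ i : Fin n, (∀ j, ∑ k : Fin (m i), K ⟨i, k⟩ j = E i j) ∨ (∀ k j, K ⟨i, k⟩ j = 0)}

/-- The extended constraint matrix Ē: for each i, mᵢ stacked copies of the row Eᵢᵀ. -/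
def extE {n : ℕ} (m : Fin n → ℕ) (E : Matrix (Fin n) (Fin n) ℝ) :
    Matrix ((i : Fin n) × Fin (m i)) (Fin n) ℝ :=
  fun a j => E a.1 j

/-- `K` is a greedy gain for `v`: `K ∈ 𝒦(E)` and `Kᵢᵀ vᵢ = min{vᵢ,0}·Eᵢ` for each block i. -/
def IsGreedy {n : ℕ} (m : Fin n → ℕ) (E : Matrix (Fin n) (Fin n) ℝ)
    (v : ((i : Fin n) × Fin (m i)) → ℝ)
    (K : Matrix ((i : Fin n) × Fin (m i)) (Fin n) ℝ) : Prop :=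
  K ∈ feasibleGain m E ∧
    ∀ i j, (∑ k : Fin (m i), K ⟨i, k⟩ j * v ⟨i, k⟩)
      = minZero (fun k : Fin (m i) => v ⟨i, k⟩) * E i j

/-- The Bellman operator `p ↦ s + Aᵀp + Σᵢ min{rᵢ + Bᵢᵀp, 0}·Eᵢ`. -/
noncomputable def bellman {n : ℕ} (m : Fin n → ℕ) (A : Matrix (Fin n) (Fin n) ℝ)
    (B : Matrix (Fin n) ((i : Fin n) × Fin (m i)) ℝ)
    (s : Fin n → ℝ) (r : ((i : Fin n) × Fin (m i)) → ℝ)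
    (E : Matrix (Fin n) (Fin n) ℝ) (p : Fin n → ℝ) : Fin n → ℝ :=
  fun j => s j + Aᵀ.mulVec p j +
    ∑ i : Fin n, minZero (fun k : Fin (m i) => r ⟨i, k⟩ + Bᵀ.mulVec p ⟨i, k⟩) * E i j

section Aux

open Matrix Finset

lemma minZero_le_zero' {α : Type*} [Fintype α] (v : α → ℝ) : minZero v ≤ 0 :=
  (Finset.fold_min_le 0).2 (Or.inl le_rfl)

lemma minZero_le' {α : Type*} [Fintype α] (v : α → ℝ) (a : α) : minZero v ≤ v a :=
  (Finset.fold_min_le (v a)).2 (Or.inr ⟨a, Finset.mem_univ a, le_rfl⟩)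

lemma minZero_eq_or' {α : Type*} [Fintype α] (v : α → ℝ) :
    minZero v = 0 ∨ ∃ a, minZero v = v a := by
  have h := (Finset.le_fold_min (f := v) (b := (0:ℝ)) (s := Finset.univ) (minZero v)).1 le_rfl
  by_cases h0 : (0:ℝ) ≤ minZero v
  · exact Or.inl (le_antisymm (minZero_le_zero' v) h0)
  · push_neg at h0
    by_contra hc
    push_neg at hc
    have := (Finset.fold_min_le (f := v) (b := (0:ℝ)) (s := Finset.univ) (minZero v)).1 le_rfl
    rcases this with h1 | ⟨a, _, ha⟩
    · exact absurd h1 (not_le.2 h0)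
    · exact hc.2 a (le_antisymm (h.2 a (Finset.mem_univ a)) ha)

lemma exists_greedy' {n : ℕ} {m : Fin n → ℕ} (hm : ∀ i, 0 < m i)
    (E : Matrix (Fin n) (Fin n) ℝ) (hE : ∀ i j, 0 ≤ E i j)
    (v : ((i : Fin n) × Fin (m i)) → ℝ) :
    ∃ K ∈ feasibleGain m E,
      (∀ a j, K a j ≤ E a.1 j) ∧
      (∀ i j, ∑ k : Fin (m i), K ⟨i, k⟩ j * v ⟨i, k⟩
          = minZero (fun k : Fin (m i) => v ⟨i, k⟩) * E i j) := by
  classical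
  have hne : ∀ i, Nonempty (Fin (m i)) := fun i => ⟨⟨0, hm i⟩⟩
  choose ks hks using fun i : Fin n =>
    Finite.exists_min (α := Fin (m i)) (fun k => v ⟨i, k⟩)
  set K : Matrix ((i : Fin n) × Fin (m i)) (Fin n) ℝ :=
    fun a j => if v ⟨a.1, ks a.1⟩ < 0 ∧ a.2 = ks a.1 then E a.1 j else 0 with hKdef
  have hKval : ∀ (i : Fin n) (k : Fin (m i)) (j : Fin n),
      K ⟨i, k⟩ j = if v ⟨i, ks i⟩ < 0 ∧ k = ks i then E i j else 0 := fun i k j => rfl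
  have hmz : ∀ i : Fin n, minZero (fun k : Fin (m i) => v ⟨i, k⟩)
      = min 0 (v ⟨i, ks i⟩) := by
    intro i
    rcases minZero_eq_or' (fun k : Fin (m i) => v ⟨i, k⟩) with h | ⟨a, ha⟩
    · rw [h]
      have := minZero_le' (fun k : Fin (m i) => v ⟨i, k⟩) (ks i)
      rw [h] at this
      exact (min_eq_left this).symm
    · rw [ha]
      have h1 : v ⟨i, ks i⟩ ≤ v ⟨i, a⟩ := hks i a
      have h2 := minZero_le' (fun k : Fin (m i) => v ⟨i, k⟩) (ks i)
      rw [ha] at h2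
      have h3 := minZero_le_zero' (fun k : Fin (m i) => v ⟨i, k⟩)
      rw [ha] at h3
      have : v ⟨i, a⟩ = v ⟨i, ks i⟩ := le_antisymm h2 h1
      rw [this] at h3 ⊢
      exact (min_eq_right h3).symm
  have hsum : ∀ (i : Fin n) (j : Fin n), ∑ k : Fin (m i), K ⟨i, k⟩ j
      = if v ⟨i, ks i⟩ < 0 then E i j else 0 := by
    intro i j
    by_cases hneg : v ⟨i, ks i⟩ < 0
    · simp only [hKval, hneg, true_and, if_pos]
      rw [Finset.sum_ite_eq' Finset.univ (ks i) (fun _ => E i j)]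
      simp [hneg]
    · simp [hKval, hneg]
  refine ⟨K, ⟨fun a j => ?_, fun i => ?_⟩, fun a j => ?_, fun i j => ?_⟩
  · rw [hKdef]; dsimp only; split <;> [exact hE a.1 j; exact le_rfl]
  · by_cases hneg : v ⟨i, ks i⟩ < 0
    · exact Or.inl (fun j => by rw [hsum i j, if_pos hneg])
    · exact Or.inr (fun k j => by rw [hKval]; simp [hneg])
  · rw [hKdef]; dsimp only; split <;> [exact le_rfl; exact hE a.1 j]
  · rw [hmz i]
    by_cases hneg : v ⟨i, ks i⟩ < 0
    · have : ∑ k : Fin (m i), K ⟨i, k⟩ j * v ⟨i, k⟩ = E i j * v ⟨i, ks i⟩ := by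
        simp only [hKval, hneg, true_and, ite_mul, zero_mul]
        rw [Finset.sum_ite_eq' Finset.univ (ks i) (fun k => E i j * v ⟨i, k⟩)]
        simp
      rw [this, min_eq_right hneg.le, mul_comm]
    · have : ∑ k : Fin (m i), K ⟨i, k⟩ j * v ⟨i, k⟩ = 0 := by
        simp [hKval, hneg]
      rw [this, min_eq_left (not_lt.1 hneg), zero_mul]

lemma feasible_ge' {n : ℕ} {m : Fin n → ℕ}
    (E : Matrix (Fin n) (Fin n) ℝ) (hE : ∀ i j, 0 ≤ E i j)
    (K : Matrix ((i : Fin n) × Fin (m i)) (Fin n) ℝ) (hK : K ∈ feasibleGain m E)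
    (v : ((i : Fin n) × Fin (m i)) → ℝ) (i j : Fin n) :
    minZero (fun k : Fin (m i) => v ⟨i, k⟩) * E i j
      ≤ ∑ k : Fin (m i), K ⟨i, k⟩ j * v ⟨i, k⟩ := by
  set μ := minZero (fun k : Fin (m i) => v ⟨i, k⟩) with hμ
  have hμ0 : μ ≤ 0 := minZero_le_zero' _
  have step : ∑ k : Fin (m i), K ⟨i, k⟩ j * μ ≤ ∑ k : Fin (m i), K ⟨i, k⟩ j * v ⟨i, k⟩ :=
    Finset.sum_le_sum fun k _ =>
      mul_le_mul_of_nonneg_left (minZero_le' (fun k : Fin (m i) => v ⟨i, k⟩) k) (hK.1 _ j)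
  rcases hK.2 i with h | h
  · have e : μ * E i j = ∑ k : Fin (m i), K ⟨i, k⟩ j * μ := by
      rw [← Finset.sum_mul, h j, mul_comm]
    rw [e]; exact step
  · have hz : ∑ k : Fin (m i), K ⟨i, k⟩ j * v ⟨i, k⟩ = 0 := by simp [h]
    rw [hz]
    exact mul_nonpos_iff.2 (Or.inr ⟨hμ0, hE i j⟩)

lemma mulVec_mono' {n : ℕ} (M : Matrix (Fin n) (Fin n) ℝ) (hM : ∀ i j, 0 ≤ M i j)
    (x y : Fin n → ℝ) (h : ∀ j, x j ≤ y j) : ∀ j, M.mulVec x j ≤ M.mulVec y j := by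
  intro j
  simp only [Matrix.mulVec, dotProduct]
  exact Finset.sum_le_sum fun l _ => mul_le_mul_of_nonneg_left (h l) (hM j l)

lemma mulVec_nonneg' {n : ℕ} (M : Matrix (Fin n) (Fin n) ℝ) (hM : ∀ i j, 0 ≤ M i j)
    (x : Fin n → ℝ) (hx : ∀ j, 0 ≤ x j) : ∀ j, 0 ≤ M.mulVec x j := by
  intro j
  simp only [Matrix.mulVec, dotProduct]
  exact Finset.sum_nonneg fun l _ => mul_nonneg (hM j l) (hx l)

lemma pow_nonneg'' {n : ℕ} (M : Matrix (Fin n) (Fin n) ℝ) (hM : ∀ i j, 0 ≤ M i j) :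
    ∀ t i j, 0 ≤ (M ^ t) i j := by
  intro t
  induction t with
  | zero =>
    intro i j
    rw [pow_zero, Matrix.one_apply]
    split <;> norm_num
  | succ t ih =>
    intro i j
    rw [pow_succ, Matrix.mul_apply]
    exact Finset.sum_nonneg fun l _ => mul_nonneg (ih i l) (hM l j)

end Aux
/-- comparison lemma. If `p ≥ 0` solves the algebraic equation and
`p̂ ≥ 0` satisfies the algebraic inequality, then `p̂ ≥ p` entrywise. -/
theorem stmt_1 {n : ℕ} {m : Fin n → ℕ} (hn : 0 < n) (hm : ∀ i, 0 < m i)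
    (A : Matrix (Fin n) (Fin n) ℝ) (B : Matrix (Fin n) ((i : Fin n) × Fin (m i)) ℝ)
    (s : Fin n → ℝ) (hs : ∀ j, 0 ≤ s j)
    (r : ((i : Fin n) × Fin (m i)) → ℝ) (hr : ∀ a, 0 ≤ r a)
    (E : Matrix (Fin n) (Fin n) ℝ) (hE : ∀ i j, 0 ≤ E i j)
    (hpos : ∀ K ∈ feasibleGain m E, ∀ x : Fin n → ℝ, (∀ j, 0 ≤ x j) →
      ∀ j, 0 ≤ (A + B * K).mulVec x j)
    (hsr : ∀ j, (extE m E)ᵀ.mulVec r j < s j)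
    (p phat : Fin n → ℝ) (hp0 : ∀ j, 0 ≤ p j) (hphat0 : ∀ j, 0 ≤ phat j)
    (hp : p = bellman m A B s r E p)
    (hphat : ∀ j, bellman m A B s r E phat j ≤ phat j) :
    ∀ j, p j ≤ phat j := by

  classical
  haveI : Nonempty (Fin n) := Fin.pos_iff_nonempty.1 hn
  obtain ⟨K, hKfeas, hKle, hKgr⟩ :=
    exists_greedy' hm E hE (fun a => r a + Bᵀ.mulVec phat a)
  have hKgr' : ∀ i j, ∑ k : Fin (m i), K ⟨i, k⟩ j * (r ⟨i, k⟩ + Bᵀ.mulVec phat ⟨i, k⟩)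
      = minZero (fun k : Fin (m i) => r ⟨i, k⟩ + Bᵀ.mulVec phat ⟨i, k⟩) * E i j := hKgr
  set M : Matrix (Fin n) (Fin n) ℝ := (A + B * K)ᵀ with hMdef
  -- M is entrywise nonnegative
  have hMnn : ∀ i j, 0 ≤ M i j := by
    intro i j
    set x : Fin n → ℝ := Pi.single i 1 with hxdef
    have hx : ∀ l, (0:ℝ) ≤ x l := by
      intro l; rcases eq_or_ne l i with h | h <;> simp [hxdef, Pi.single_apply, h]
    have h := hpos K hKfeas x hx j
    have e : (A + B * K).mulVec x j = (A + B * K) j i := by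
      simp [hxdef, Matrix.mulVec, dotProduct, Pi.single_apply]
    rw [e] at h
    exact h
  -- expansion identity
  have sigEq : ∀ (f : ((i : Fin n) × Fin (m i)) → ℝ),
      (∑ i : Fin n, ∑ k : Fin (m i), f ⟨i, k⟩) = ∑ a : (i : Fin n) × Fin (m i), f a := by
    intro f
    rw [← Finset.univ_sigma_univ, Finset.sum_sigma]
  have key : ∀ (q : Fin n → ℝ) (j : Fin n),
      Aᵀ.mulVec q j + ∑ a : (i : Fin n) × Fin (m i), K a j * (r a + Bᵀ.mulVec q a)
        = (∑ a : (i : Fin n) × Fin (m i), K a j * r a) + M.mulVec q j := by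
    intro q j
    have e1 : Aᵀ.mulVec q j = ∑ l, A l j * q l := by
      simp [Matrix.mulVec, dotProduct, Matrix.transpose_apply]
    have e2 : ∀ a : (i : Fin n) × Fin (m i), Bᵀ.mulVec q a = ∑ l, B l a * q l := by
      intro a; simp [Matrix.mulVec, dotProduct, Matrix.transpose_apply]
    have e3 : M.mulVec q j
        = ∑ l, (A l j + ∑ a : (i : Fin n) × Fin (m i), K a j * B l a) * q l := by
      simp [hMdef, Matrix.mulVec, dotProduct, Matrix.transpose_apply,
        Matrix.add_apply, Matrix.mul_apply]
    have hswap : (∑ a : (i : Fin n) × Fin (m i), ∑ l, K a j * (B l a * q l))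
        = ∑ l, ∑ a : (i : Fin n) × Fin (m i), K a j * B l a * q l := by
      rw [Finset.sum_comm]
      exact Finset.sum_congr rfl fun l _ => Finset.sum_congr rfl fun a _ => by ring
    simp only [e1, e2, e3, mul_add, add_mul, Finset.sum_add_distrib, Finset.mul_sum,
      Finset.sum_mul, hswap]
    ring
  -- the identity for phat and the inequality for p
  have id1 : ∀ j, bellman m A B s r E phat j
      = s j + ((∑ a : (i : Fin n) × Fin (m i), K a j * r a) + M.mulVec phat j) := by
    intro j
    have h1 : ∑ i : Fin n,
        minZero (fun k : Fin (m i) => r ⟨i, k⟩ + Bᵀ.mulVec phat ⟨i, k⟩) * E i j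
        = ∑ a : (i : Fin n) × Fin (m i), K a j * (r a + Bᵀ.mulVec phat a) := by
      rw [← sigEq (fun a => K a j * (r a + Bᵀ.mulVec phat a))]
      exact Finset.sum_congr rfl fun i _ => (hKgr' i j).symm
    simp only [bellman, h1]
    rw [add_assoc, key phat j]
  have ineq2 : ∀ j, bellman m A B s r E p j
      ≤ s j + ((∑ a : (i : Fin n) × Fin (m i), K a j * r a) + M.mulVec p j) := by
    intro j
    have h1 : ∑ i : Fin n,
        minZero (fun k : Fin (m i) => r ⟨i, k⟩ + Bᵀ.mulVec p ⟨i, k⟩) * E i j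
        ≤ ∑ a : (i : Fin n) × Fin (m i), K a j * (r a + Bᵀ.mulVec p a) := by
      rw [← sigEq (fun a => K a j * (r a + Bᵀ.mulVec p a))]
      exact Finset.sum_le_sum fun i _ =>
        feasible_ge' E hE K hKfeas (fun a => r a + Bᵀ.mulVec p a) i j
    calc bellman m A B s r E p j
        ≤ s j + Aᵀ.mulVec p j
          + ∑ a : (i : Fin n) × Fin (m i), K a j * (r a + Bᵀ.mulVec p a) := by
          simp only [bellman]; linarith
      _ = s j + ((∑ a : (i : Fin n) × Fin (m i), K a j * r a) + M.mulVec p j) := by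
          rw [add_assoc, key p j]
  -- the cost vector c
  set c : Fin n → ℝ := fun j => s j - ∑ a : (i : Fin n) × Fin (m i), K a j * r a with hcdef
  have hcpos : ∀ j, 0 < c j := by
    intro j
    have h1 : ∑ a : (i : Fin n) × Fin (m i), K a j * r a ≤ (extE m E)ᵀ.mulVec r j := by
      have e : (extE m E)ᵀ.mulVec r j = ∑ a : (i : Fin n) × Fin (m i), E a.1 j * r a := by
        simp [Matrix.mulVec, dotProduct, extE, Matrix.transpose_apply]
      rw [e]
      exact Finset.sum_le_sum fun a _ => mul_le_mul_of_nonneg_right (hKle a j) (hr a)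
    have h2 := hsr j
    simp only [hcdef]
    linarith
  have hMphat : ∀ j, M.mulVec phat j ≤ phat j - c j := by
    intro j
    have h := hphat j
    rw [id1 j] at h
    have hS : 0 ≤ ∑ a : (i : Fin n) × Fin (m i), K a j * r a :=
      Finset.sum_nonneg fun a _ => mul_nonneg (hKfeas.1 a j) (hr a)
    simp only [hcdef]
    linarith
  -- w = p - phat satisfies w ≤ Mw
  have hwMw : ∀ j, p j - phat j ≤ M.mulVec (fun l => p l - phat l) j := by
    intro j
    have h1 : p j ≤ s j + ((∑ a : (i : Fin n) × Fin (m i), K a j * r a) + M.mulVec p j) := by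
      conv_lhs => rw [hp]
      exact ineq2 j
    have h2 : s j + ((∑ a : (i : Fin n) × Fin (m i), K a j * r a) + M.mulVec phat j)
        ≤ phat j := by rw [← id1 j]; exact hphat j
    have h3 : M.mulVec (fun l => p l - phat l) j = M.mulVec p j - M.mulVec phat j := by
      have := congrFun (Matrix.mulVec_sub M p phat) j
      exact this
    rw [h3]
    linarith
  -- positive part
  set w : Fin n → ℝ := fun j => max (p j - phat j) 0 with hwdef
  have hw0 : ∀ j, 0 ≤ w j := fun j => le_max_right _ _
  have hwle : ∀ j, p j - phat j ≤ w j := fun j => le_max_left _ _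
  have hwM : ∀ j, w j ≤ M.mulVec w j := by
    intro j
    refine max_le ?_ (mulVec_nonneg' M hMnn w hw0 j)
    exact le_trans (hwMw j) (mulVec_mono' M hMnn _ _ hwle j)
  -- iterates
  have hiter : ∀ t j, w j ≤ (M ^ t).mulVec w j := by
    intro t
    induction t with
    | zero => intro j; rw [pow_zero, Matrix.one_mulVec]
    | succ t ih =>
      intro j
      have h2 := mulVec_mono' (M ^ t) (pow_nonneg'' M hMnn t) _ _ hwM j
      have h3 : (M ^ t).mulVec (M.mulVec w) = (M ^ (t + 1)).mulVec w := by
        rw [Matrix.mulVec_mulVec, ← pow_succ]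
      exact le_trans (ih j) (h3 ▸ h2)
  -- partial sums of M^t c are bounded by phat
  have hsumle : ∀ T j, ∑ t ∈ Finset.range T, (M ^ t).mulVec c j ≤ phat j := by
    have main : ∀ T j,
        (∑ t ∈ Finset.range T, (M ^ t).mulVec c j) + (M ^ T).mulVec phat j ≤ phat j := by
      intro T
      induction T with
      | zero => intro j; simp [Matrix.one_mulVec]
      | succ T ih =>
        intro j
        have h1 : (M ^ (T + 1)).mulVec phat j
            ≤ (M ^ T).mulVec phat j - (M ^ T).mulVec c j := by
          have h2 : (M ^ (T + 1)).mulVec phat = (M ^ T).mulVec (M.mulVec phat) := by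
            rw [Matrix.mulVec_mulVec, ← pow_succ]
          have h3 := mulVec_mono' (M ^ T) (pow_nonneg'' M hMnn T) _ _ hMphat j
          have h4 : (M ^ T).mulVec (fun l => phat l - c l) j
              = (M ^ T).mulVec phat j - (M ^ T).mulVec c j := by
            have := congrFun (Matrix.mulVec_sub (M ^ T) phat c) j
            exact this
          rw [h2]
          rw [h4] at h3
          exact h3
        have h5 := ih j
        rw [Finset.sum_range_succ]
        linarith
    intro T j
    have h0 := mulVec_nonneg' (M ^ T) (pow_nonneg'' M hMnn T) phat hphat0 j
    linarith [main T j]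
  -- extremal indices
  obtain ⟨j0, hj0⟩ := Finite.exists_min c
  obtain ⟨j1, hj1⟩ := Finite.exists_max w
  have hε : 0 < c j0 := hcpos j0
  have hδ0 : 0 ≤ w j1 := hw0 j1
  have hbase : ∀ l, c j0 * w l ≤ w j1 * c l := by
    intro l
    calc c j0 * w l ≤ c j0 * w j1 := mul_le_mul_of_nonneg_left (hj1 l) hε.le
      _ = w j1 * c j0 := by ring
      _ ≤ w j1 * c l := mul_le_mul_of_nonneg_left (hj0 l) hδ0
  have hkey : ∀ t j, c j0 * w j ≤ w j1 * (M ^ t).mulVec c j := by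
    intro t j
    have h1 : c j0 * w j ≤ c j0 * (M ^ t).mulVec w j :=
      mul_le_mul_of_nonneg_left (hiter t j) hε.le
    have h2 : (M ^ t).mulVec (c j0 • w) j ≤ (M ^ t).mulVec (w j1 • c) j :=
      mulVec_mono' (M ^ t) (pow_nonneg'' M hMnn t) _ _
        (fun l => by simpa [smul_eq_mul] using hbase l) j
    have e1 : (M ^ t).mulVec (c j0 • w) j = c j0 * (M ^ t).mulVec w j := by
      rw [Matrix.mulVec_smul]; simp
    have e2 : (M ^ t).mulVec (w j1 • c) j = w j1 * (M ^ t).mulVec c j := by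
      rw [Matrix.mulVec_smul]; simp
    rw [e1, e2] at h2
    linarith
  have hT : ∀ (j : Fin n) (T : ℕ), (T : ℝ) * (c j0 * w j) ≤ w j1 * phat j := by
    intro j T
    have h1 : ∑ t ∈ Finset.range T, (c j0 * w j)
        ≤ ∑ t ∈ Finset.range T, w j1 * (M ^ t).mulVec c j :=
      Finset.sum_le_sum fun t _ => hkey t j
    rw [Finset.sum_const, Finset.card_range, nsmul_eq_mul] at h1
    rw [← Finset.mul_sum] at h1
    have h2 : w j1 * ∑ t ∈ Finset.range T, (M ^ t).mulVec c j ≤ w j1 * phat j :=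
      mul_le_mul_of_nonneg_left (hsumle T j) hδ0
    linarith
  -- conclusion
  intro j
  have hwj : w j ≤ 0 := by
    by_contra hwj
    push_neg at hwj
    have hx : 0 < c j0 * w j := mul_pos hε hwj
    obtain ⟨T, hT'⟩ := exists_nat_gt ((w j1 * phat j) / (c j0 * w j))
    have := hT j T
    rw [div_lt_iff₀ hx] at hT'
    linarith
  have := hwle j
  linarith
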